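/- Let r > 0 be a real constant, let k₁ : ℝ → ℝ be differentiable, let f : ℝ² → ℝ be differentiable, and assume 1 − r·k₁(s)·cosh(f(t,w)) ≠ 0 for all (s,t,w). Define K, H : ℝ³ → ℝ by K(s,t,w) = k₁(s)cosh(f(t,w)) / ( r²( 1 − r k₁(s) cosh(f(t,w)) ) ) and H(s,t,w) = ( 3r k₁(s) cosh(f(t,w)) − 2 ) / ( 3r( 1 − r k₁(s) cosh(f(t,w)) ) ). Then at every point (s,t,w): ∂H/∂s·∂K/∂t − ∂H/∂t·∂K/∂s = 0, ∂H/∂s·∂K/∂w − ∂H/∂w·∂K/∂s = 0, and ∂H/∂t·∂K/∂w − ∂H/∂w·∂K/∂t = 0. -/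

import Mathlib

/-- The tubular hypersurface `T₃` over a partially null curve is Weingarten: the
Jacobians of `(H, K)` with respect to each pair of parameters vanish. -/
theorem partiallyNull_tube_Weingarten
    (r : ℝ) (hr : 0 < r) (k₁ : ℝ → ℝ) (hk₁ : Differentiable ℝ k₁)
    (f : ℝ → ℝ → ℝ)
    (hf : Differentiable ℝ (Function.uncurry f))
    (hden : ∀ s t w, 1 - r * k₁ s * Real.cosh (f t w) ≠ 0)
    (K H : ℝ → ℝ → ℝ → ℝ)
    (hK : ∀ s t w, K s t w = k₁ s * Real.cosh (f t w) /
      (r ^ 2 * (1 - r * k₁ s * Real.cosh (f t w))))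
    (hH : ∀ s t w, H s t w = (3 * r * k₁ s * Real.cosh (f t w) - 2) /
      (3 * r * (1 - r * k₁ s * Real.cosh (f t w)))) :
    ∀ s t w,
      deriv (fun x => H x t w) s * deriv (fun x => K s x w) t -
        deriv (fun x => H s x w) t * deriv (fun x => K x t w) s = 0 ∧
      deriv (fun x => H x t w) s * deriv (fun x => K s t x) w -
        deriv (fun x => H s t x) w * deriv (fun x => K x t w) s = 0 ∧
      deriv (fun x => H s x w) t * deriv (fun x => K s t x) w -
        deriv (fun x => H s t x) w * deriv (fun x => K s x w) t = 0 := by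
  intro s t w
  set Φ : ℝ → ℝ := fun u => u / (r ^ 2 * (1 - r * u)) with hΦ
  set Ψ : ℝ → ℝ := fun u => (3 * r * u - 2) / (3 * r * (1 - r * u)) with hΨ
  set u₀ : ℝ := k₁ s * Real.cosh (f t w) with hu₀
  have hd : 1 - r * u₀ ≠ 0 := by
    have := hden s t w; rwa [mul_assoc] at this
  have hΦd : DifferentiableAt ℝ Φ u₀ := by
    apply DifferentiableAt.div
    · exact differentiableAt_fun_id
    · exact (differentiableAt_const _).mul
        ((differentiableAt_const _).sub ((differentiableAt_const r).mul differentiableAt_fun_id))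
    · exact mul_ne_zero (pow_ne_zero 2 hr.ne') hd
  have hΨd : DifferentiableAt ℝ Ψ u₀ := by
    apply DifferentiableAt.div
    · exact (((differentiableAt_const _).mul differentiableAt_fun_id).sub (differentiableAt_const _))
    · exact (differentiableAt_const _).mul
        ((differentiableAt_const _).sub ((differentiableAt_const r).mul differentiableAt_fun_id))
    · exact mul_ne_zero (by positivity) hd
  -- directional inner functions
  have ha : DifferentiableAt ℝ (fun x => k₁ x * Real.cosh (f t w)) s :=
    (hk₁ s).mul_const _
  have hft : DifferentiableAt ℝ (fun x => f x w) t := by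
    have : (fun x => f x w) = Function.uncurry f ∘ fun x => (x, w) := rfl
    rw [this]
    exact (hf _).comp t (DifferentiableAt.prodMk differentiableAt_fun_id (differentiableAt_const _))
  have hfw : DifferentiableAt ℝ (fun x => f t x) w := by
    have : (fun x => f t x) = Function.uncurry f ∘ fun x => ((t : ℝ), x) := rfl
    rw [this]
    exact (hf _).comp w (DifferentiableAt.prodMk (differentiableAt_const _) differentiableAt_fun_id)
  have hb : DifferentiableAt ℝ (fun x => k₁ s * Real.cosh (f x w)) t :=
    (differentiableAt_const _).mul (Real.differentiable_cosh.differentiableAt.comp t hft)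
  have hc : DifferentiableAt ℝ (fun x => k₁ s * Real.cosh (f t x)) w :=
    (differentiableAt_const _).mul (Real.differentiable_cosh.differentiableAt.comp w hfw)
  -- rewrite the four partials via the chain rule
  have eKs : (fun x => K x t w) = Φ ∘ fun x => k₁ x * Real.cosh (f t w) := by
    funext x; simp [hK, hΦ, mul_assoc]
  have eKt : (fun x => K s x w) = Φ ∘ fun x => k₁ s * Real.cosh (f x w) := by
    funext x; simp [hK, hΦ, mul_assoc]
  have eKw : (fun x => K s t x) = Φ ∘ fun x => k₁ s * Real.cosh (f t x) := by
    funext x; simp [hK, hΦ, mul_assoc]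
  have eHs : (fun x => H x t w) = Ψ ∘ fun x => k₁ x * Real.cosh (f t w) := by
    funext x; simp [hH, hΨ, mul_assoc]
  have eHt : (fun x => H s x w) = Ψ ∘ fun x => k₁ s * Real.cosh (f x w) := by
    funext x; simp [hH, hΨ, mul_assoc]
  have eHw : (fun x => H s t x) = Ψ ∘ fun x => k₁ s * Real.cosh (f t x) := by
    funext x; simp [hH, hΨ, mul_assoc]
  have dKs : deriv (fun x => K x t w) s =
      deriv Φ u₀ * deriv (fun x => k₁ x * Real.cosh (f t w)) s := by
    rw [eKs]; exact deriv_comp s hΦd ha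
  have dKt : deriv (fun x => K s x w) t =
      deriv Φ u₀ * deriv (fun x => k₁ s * Real.cosh (f x w)) t := by
    rw [eKt]; exact deriv_comp t hΦd hb
  have dKw : deriv (fun x => K s t x) w =
      deriv Φ u₀ * deriv (fun x => k₁ s * Real.cosh (f t x)) w := by
    rw [eKw]; exact deriv_comp w hΦd hc
  have dHs : deriv (fun x => H x t w) s =
      deriv Ψ u₀ * deriv (fun x => k₁ x * Real.cosh (f t w)) s := by
    rw [eHs]; exact deriv_comp s hΨd ha
  have dHt : deriv (fun x => H s x w) t =
      deriv Ψ u₀ * deriv (fun x => k₁ s * Real.cosh (f x w)) t := by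
    rw [eHt]; exact deriv_comp t hΨd hb
  have dHw : deriv (fun x => H s t x) w =
      deriv Ψ u₀ * deriv (fun x => k₁ s * Real.cosh (f t x)) w := by
    rw [eHw]; exact deriv_comp w hΨd hc
  refine ⟨?_, ?_, ?_⟩ <;> simp only [dKs, dKt, dKw, dHs, dHt, dHw] <;> ring
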